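/- arXiv:0705.2699 — 7 statements merged into one kernel-verified Lean document; each statement's English description precedes it below -/
import Mathlib

section
/- For every real y and every complex s with 0 < Re(s) < 1, the function y ↦ e^{sy}/(1 + e^y) is integrable on ℝ and π/sin(πs) = ∫_ℝ e^{sy}/(1 + e^y) dy. -/
open MeasureTheory Set

namespace PiDivSinAux

noncomputable def sig (y : ℝ) : ℝ := Real.exp y / (1 + Real.exp y)

lemma hA (y : ℝ) : 0 < 1 + Real.exp y := by positivity

lemma sig_pos (y : ℝ) : 0 < sig y := div_pos (Real.exp_pos y) (hA y)

lemma sig_lt_one (y : ℝ) : sig y < 1 :=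
  (div_lt_one (hA y)).mpr (by linarith)

lemma one_sub_sig (y : ℝ) : 1 - sig y = (1 + Real.exp y)⁻¹ := by
  unfold sig; field_simp; ring

lemma hasDerivAt_sig (y : ℝ) :
    HasDerivAt sig (Real.exp y / (1 + Real.exp y) ^ 2) y := by
  have h := (Real.hasDerivAt_exp y).div
    ((hasDerivAt_const y (1 : ℝ)).add (Real.hasDerivAt_exp y)) (hA y).ne'
  convert h using 1
  · rfl
  · rfl
  · rfl
  · simp only [Pi.add_apply]
    ring

lemma sig_injective : Function.Injective sig := by
  intro a b hab
  have ha : sig a = 1 - (1 + Real.exp a)⁻¹ := by rw [← one_sub_sig]; ring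
  have hb : sig b = 1 - (1 + Real.exp b)⁻¹ := by rw [← one_sub_sig]; ring
  rw [ha, hb] at hab
  have h2 : (1 + Real.exp a)⁻¹ = (1 + Real.exp b)⁻¹ := by linarith
  have h3 : 1 + Real.exp a = 1 + Real.exp b := by
    have := inv_inj.mp h2; linarith
  have := add_left_cancel h3
  exact Real.exp_injective this

lemma range_sig : Set.range sig = Ioo (0 : ℝ) 1 := by
  ext t
  constructor
  · rintro ⟨y, rfl⟩
    exact ⟨sig_pos y, sig_lt_one y⟩
  · rintro ⟨ht0, ht1⟩
    refine ⟨Real.log (t / (1 - t)), ?_⟩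
    have h1t : 0 < 1 - t := by linarith
    have hexp : Real.exp (Real.log (t / (1 - t))) = t / (1 - t) :=
      Real.exp_log (div_pos ht0 h1t)
    unfold sig
    rw [hexp]
    field_simp; ring

end PiDivSinAux

open PiDivSinAux

/-- Two-sided Laplace representation of π/sin(πs) on the strip 0 < Re s < 1. -/
theorem pi_div_sin_laplace (s : ℂ) (h0 : 0 < s.re) (h1 : s.re < 1) :
    MeasureTheory.Integrable
        (fun y : ℝ => Complex.exp (s * y) / ((1 + Real.exp y : ℝ) : ℂ)) ∧
      (Real.pi : ℂ) / Complex.sin ((Real.pi : ℂ) * s) =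
        ∫ y : ℝ, Complex.exp (s * y) / ((1 + Real.exp y : ℝ) : ℂ) := by
  set g : ℝ → ℂ := fun x => (x : ℂ) ^ (s - 1) * (1 - (x : ℂ)) ^ ((1 - s) - 1) with hg
  -- the pointwise change-of-variables identity
  have key : ∀ y : ℝ, |Real.exp y / (1 + Real.exp y) ^ 2| • g (sig y)
      = Complex.exp (s * y) / ((1 + Real.exp y : ℝ) : ℂ) := by
    intro y
    set A : ℝ := 1 + Real.exp y with hAdef
    have hA0 : 0 < A := hA y
    set L : ℝ := Real.log A with hL
    have hexpL : Real.exp L = A := Real.exp_log hA0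
    have hσ : (sig y : ℝ) = Real.exp y / A := rfl
    have hσpos : 0 < sig y := sig_pos y
    have h1σ : 1 - (sig y : ℂ) = ((A⁻¹ : ℝ) : ℂ) := by
      rw [show (1 : ℂ) - (sig y : ℂ) = ((1 - sig y : ℝ) : ℂ) by push_cast; ring,
        one_sub_sig y]
    have hlogσ : Real.log (sig y) = y - L := by
      rw [hσ, Real.log_div (Real.exp_pos y).ne' hA0.ne', Real.log_exp, hL]
    -- rewrite the two cpows as complex exponentials
    have c1 : (sig y : ℂ) ^ (s - 1) = Complex.exp (((y : ℂ) - L) * (s - 1)) := by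
      rw [Complex.cpow_def_of_ne_zero (by exact_mod_cast hσpos.ne' : (sig y : ℂ) ≠ 0),
        ← Complex.ofReal_log hσpos.le, hlogσ]
      push_cast; ring_nf
    have c2 : (1 - (sig y : ℂ)) ^ ((1 - s) - 1) = Complex.exp ((L : ℂ) * s) := by
      rw [h1σ, Complex.cpow_def_of_ne_zero
          (by exact_mod_cast (inv_pos.mpr hA0).ne' : ((A⁻¹ : ℝ) : ℂ) ≠ 0),
        ← Complex.ofReal_log (inv_pos.mpr hA0).le, Real.log_inv, ← hL]
      push_cast; ring_nf
    have habs : |Real.exp y / A ^ 2| = Real.exp y / A ^ 2 :=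
      abs_of_pos (by positivity)
    have hcoe : ((Real.exp y / A ^ 2 : ℝ) : ℂ) = Complex.exp ((y : ℂ) - 2 * L) := by
      have : Real.exp y / A ^ 2 = Real.exp (y - 2 * L) := by
        rw [Real.exp_sub, two_mul, Real.exp_add, hexpL, sq]
      rw [this, Complex.ofReal_exp]; push_cast; ring_nf
    have hAexp : ((A : ℝ) : ℂ) = Complex.exp (L : ℂ) := by
      rw [← Complex.ofReal_exp, hexpL]
    calc |Real.exp y / A ^ 2| • g (sig y)
        = ((Real.exp y / A ^ 2 : ℝ) : ℂ) *
            ((sig y : ℂ) ^ (s - 1) * (1 - (sig y : ℂ)) ^ ((1 - s) - 1)) := by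
          rw [habs, Complex.real_smul]
      _ = Complex.exp ((y : ℂ) - 2 * L) *
            (Complex.exp (((y : ℂ) - L) * (s - 1)) * Complex.exp ((L : ℂ) * s)) := by
          rw [hcoe, c1, c2]
      _ = Complex.exp (s * y - L) := by
          rw [← Complex.exp_add, ← Complex.exp_add]; congr 1; ring
      _ = Complex.exp (s * y) / ((A : ℝ) : ℂ) := by
          rw [Complex.exp_sub, hAexp]
  -- change of variables setup
  have hderiv : ∀ y ∈ (univ : Set ℝ),
      HasDerivWithinAt sig (Real.exp y / (1 + Real.exp y) ^ 2) univ y :=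
    fun y _ => (hasDerivAt_sig y).hasDerivWithinAt
  have hinj : InjOn sig univ := fun a _ b _ h => sig_injective h
  have himg : sig '' univ = Ioo (0 : ℝ) 1 := by rw [image_univ, range_sig]
  -- integrability of g on Ioo 0 1
  have hgint : IntegrableOn g (Ioo (0 : ℝ) 1) := by
    have hb := Complex.betaIntegral_convergent (u := s) (v := 1 - s) h0
      (by rw [Complex.sub_re, Complex.one_re]; linarith)
    have := (intervalIntegrable_iff_integrableOn_Ioc_of_le zero_le_one).mp hb
    exact this.mono_set Ioo_subset_Ioc_self
  have hfun : (fun y : ℝ => |Real.exp y / (1 + Real.exp y) ^ 2| • g (sig y))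
      = fun y : ℝ => Complex.exp (s * y) / ((1 + Real.exp y : ℝ) : ℂ) :=
    funext key
  constructor
  · have := (integrableOn_image_iff_integrableOn_abs_deriv_smul
      MeasurableSet.univ hderiv hinj g).mp (himg ▸ hgint)
    rw [hfun, integrableOn_univ] at this
    exact this
  · have hchg := integral_image_eq_integral_abs_deriv_smul
      MeasurableSet.univ hderiv hinj g
    rw [himg, hfun, Measure.restrict_univ] at hchg
    have hioo : ∫ x in Ioo (0 : ℝ) 1, g x = Complex.betaIntegral s (1 - s) := by
      rw [Complex.betaIntegral, intervalIntegral.integral_of_le zero_le_one,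
        ← integral_Ioc_eq_integral_Ioo]
    rw [← hchg, hioo]
    have hB := Complex.Gamma_mul_Gamma_eq_betaIntegral (s := s) (t := 1 - s) h0
      (by rw [Complex.sub_re, Complex.one_re]; linarith)
    rw [Complex.Gamma_mul_Gamma_one_sub] at hB
    have h11 : s + (1 - s) = 1 := by ring
    rw [hB, h11, Complex.Gamma_one, one_mul]
end

section
/- Let m ≥ 0 be an integer and (a_k)_{k ≥ m} complex numbers with |a_k|^{1/k} → 0 as k → ∞. Let E(z) := ∑_{k ≥ m} a_k z^k. Let q ≥ 0 and p complex with Re(p) > 1 - m·q. Then for every complex z, the double sum converges absolutely and ∑_{n ≥ 1} (μ(n)/n^p) · E(z/n^q) = ∑_{k ≥ m} (a_k / ζ(p + kq)) · z^k, where μ is the Möbius function. -/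
open ArithmeticFunction Complex Filter

private lemma moebius_tsum_eq_inv_zeta (s : ℂ) (hs : 1 < s.re) :
    (∑' n : ℕ, (ArithmeticFunction.moebius (n + 1) : ℂ) / ((n + 1 : ℕ) : ℂ) ^ s) =
      (riemannZeta s)⁻¹ := by
  have hsum : LSeriesSummable (fun n => ((moebius n : ℤ) : ℂ)) s :=
    LSeriesSummable_moebius_iff.mpr hs
  have h1 := LSeries_one_mul_Lseries_moebius (s := s) hs
  rw [LSeries_one_eq_riemannZeta hs] at h1
  have hL : LSeries (fun n => ((moebius n : ℤ) : ℂ)) s = (riemannZeta s)⁻¹ :=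
    eq_inv_of_mul_eq_one_left (by rwa [mul_comm] at h1)
  rw [← hL, LSeries, Summable.tsum_eq_zero_add hsum, LSeries.term_zero, zero_add]
  refine tsum_congr fun n => ?_
  rw [LSeries.term_of_ne_zero (Nat.succ_ne_zero n)]

set_option maxHeartbeats 1000000

/-- Lemma 2.1: interchanging a Möbius-weighted Dirichlet sum with an entire power
series: ∑_{n ≥ 1} (μ(n)/n^p) E(z/n^q) = ∑_{k ≥ m} (a_k/ζ(p+kq)) z^k, where
E(z) = ∑_{k ≥ m} a_k z^k and |a_k|^(1/k) → 0. -/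
theorem moebius_sum_interchange (m : ℕ) (a : ℕ → ℂ) (ha0 : ∀ k < m, a k = 0)
    (hdecay : Filter.Tendsto (fun k : ℕ => ‖a k‖ ^ (1 / (k : ℝ)))
      Filter.atTop (nhds 0))
    (q : ℝ) (hq : 0 ≤ q) (p : ℂ) (hp : 1 - m * q < p.re) (z : ℂ) :
    Summable (fun nk : ℕ × ℕ =>
        ‖(ArithmeticFunction.moebius (nk.1 + 1) : ℂ) / ((nk.1 + 1 : ℕ) : ℂ) ^ p *
          (a nk.2 * (z / ((((nk.1 + 1 : ℕ) : ℝ) ^ q : ℝ) : ℂ)) ^ nk.2)‖) ∧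
      (∑' n : ℕ, (ArithmeticFunction.moebius (n + 1) : ℂ) / ((n + 1 : ℕ) : ℂ) ^ p *
          ∑' k : ℕ, a k * (z / ((((n + 1 : ℕ) : ℝ) ^ q : ℝ) : ℂ)) ^ k) =
        ∑' k : ℕ, a k / riemannZeta (p + (k : ℂ) * (q : ℂ)) * z ^ k := by
  set F : ℕ → ℕ → ℂ := fun n k =>
    (ArithmeticFunction.moebius (n + 1) : ℂ) / ((n + 1 : ℕ) : ℂ) ^ p *
      (a k * (z / ((((n + 1 : ℕ) : ℝ) ^ q : ℝ) : ℂ)) ^ k) with hF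
  have hx1 : ∀ n : ℕ, (1 : ℝ) ≤ ((n + 1 : ℕ) : ℝ) := fun n => by
    exact_mod_cast Nat.succ_le_succ (Nat.zero_le n)
  have hx0 : ∀ n : ℕ, (0 : ℝ) < ((n + 1 : ℕ) : ℝ) := fun n =>
    lt_of_lt_of_le one_pos (hx1 n)
  -- Step A : summability of the power-series coefficients times |z|^k
  have hA : Summable (fun k : ℕ => ‖a k‖ * ‖z‖ ^ k) := by
    have hε : (0 : ℝ) < (2 * (‖z‖ + 1))⁻¹ := by positivity
    have hev : ∀ᶠ k in atTop, ‖a k‖ ^ (1 / (k : ℝ)) < (2 * (‖z‖ + 1))⁻¹ :=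
      hdecay.eventually_lt_const hε
    refine Summable.of_norm_bounded_eventually_nat (g := fun k => (1 / 2 : ℝ) ^ k)
      summable_geometric_two ?_
    filter_upwards [hev, eventually_ge_atTop 1] with k hk hk1
    have hk0 : k ≠ 0 := by omega
    have hak : ‖a k‖ ≤ ((2 * (‖z‖ + 1))⁻¹) ^ k := by
      have h1 := Real.rpow_inv_natCast_pow (norm_nonneg (a k)) hk0
      calc ‖a k‖ = (‖a k‖ ^ ((k : ℝ)⁻¹)) ^ k := h1.symm
        _ ≤ ((2 * (‖z‖ + 1))⁻¹) ^ k := by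
            apply pow_le_pow_left₀ (Real.rpow_nonneg (norm_nonneg _) _)
            rw [one_div] at hk; exact hk.le
    rw [Real.norm_of_nonneg (by positivity)]
    calc ‖a k‖ * ‖z‖ ^ k ≤ ((2 * (‖z‖ + 1))⁻¹) ^ k * (‖z‖ + 1) ^ k :=
          mul_le_mul hak (pow_le_pow_left₀ (norm_nonneg z) (by linarith) k)
            (by positivity) (by positivity)
      _ = ((2 * (‖z‖ + 1))⁻¹ * (‖z‖ + 1)) ^ k := by rw [mul_pow]
      _ = (1 / 2 : ℝ) ^ k := by
          congr 1
          have hz : (‖z‖ + 1) ≠ 0 := by positivity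
          field_simp
  -- Step B : summability of the Dirichlet factor
  have hc : Summable (fun n : ℕ => ((n + 1 : ℕ) : ℝ) ^ (-(p.re + m * q))) := by
    have h : Summable (fun n : ℕ => ((n : ℕ) : ℝ) ^ (-(p.re + m * q))) :=
      Real.summable_nat_rpow.mpr (by push_cast; linarith)
    exact (summable_nat_add_iff 1).mpr h
  -- Step C : pointwise bound
  have hbound : ∀ nk : ℕ × ℕ, ‖F nk.1 nk.2‖ ≤
      ((nk.1 + 1 : ℕ) : ℝ) ^ (-(p.re + m * q)) * (‖a nk.2‖ * ‖z‖ ^ nk.2) := by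
    rintro ⟨n, k⟩
    rcases lt_or_ge k m with hk | hk
    · simp only [hF, ha0 k hk, zero_mul, mul_zero, norm_zero]
      positivity
    · set x : ℝ := ((n + 1 : ℕ) : ℝ) with hxdef
      have hx0' : (0 : ℝ) < x := hx0 n
      have hnormF : ‖F n k‖ =
          |(moebius (n + 1) : ℝ)| / x ^ p.re * (‖a k‖ * (‖z‖ / x ^ q) ^ k) := by
        simp only [hF]
        rw [norm_mul, norm_div, norm_natCast_cpow_of_pos (Nat.succ_pos n),
          norm_mul, norm_pow, norm_div]
        congr 3
        · rw [show ((moebius (n + 1) : ℂ)) = (((moebius (n + 1) : ℝ)) : ℂ) by push_cast; ring,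
            Complex.norm_real, Real.norm_eq_abs]
        · rw [Complex.norm_real, Real.norm_of_nonneg (Real.rpow_nonneg hx0'.le q)]
      rw [hnormF]
      have hμ : |(moebius (n + 1) : ℝ)| ≤ 1 := by
        have := abs_moebius_le_one (n := n + 1)
        exact_mod_cast this
      have hzx : (‖z‖ / x ^ q) ^ k = ‖z‖ ^ k * x ^ (-(q * (k : ℝ))) := by
        have h2 : (x ^ q) ^ k = x ^ (q * (k : ℝ)) := by
          rw [← Real.rpow_natCast (x ^ q) k, ← Real.rpow_mul hx0'.le]
        rw [div_pow, h2, div_eq_mul_inv, ← Real.rpow_neg hx0'.le]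
      rw [hzx]
      have hxp : (0 : ℝ) < x ^ p.re := Real.rpow_pos_of_pos hx0' _
      have h1 : x ^ (-(q * (k : ℝ))) ≤ x ^ (-(q * (m : ℝ))) := by
        apply Real.rpow_le_rpow_of_exponent_le (hx1 n)
        have : q * (m : ℝ) ≤ q * (k : ℝ) :=
          mul_le_mul_of_nonneg_left (by exact_mod_cast hk) hq
        linarith
      have h2 : |(moebius (n + 1) : ℝ)| / x ^ p.re ≤ 1 / x ^ p.re :=
        (div_le_div_iff_of_pos_right hxp).mpr hμ
      have key : |(moebius (n + 1) : ℝ)| / x ^ p.re * (‖a k‖ * (‖z‖ ^ k * x ^ (-(q * (k : ℝ))))) ≤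
          1 / x ^ p.re * (‖a k‖ * (‖z‖ ^ k * x ^ (-(q * (m : ℝ))))) := by
        refine mul_le_mul h2 ?_ (by positivity) (by positivity)
        refine mul_le_mul_of_nonneg_left ?_ (norm_nonneg _)
        exact mul_le_mul_of_nonneg_left h1 (by positivity)
      refine key.trans (le_of_eq ?_)
      rw [one_div, ← Real.rpow_neg hx0'.le,
        show -(p.re + (m : ℝ) * q) = -p.re + -(q * (m : ℝ)) by ring,
        Real.rpow_add hx0']
      ring
  -- norm summability
  have hprod : Summable (fun nk : ℕ × ℕ =>
      ((nk.1 + 1 : ℕ) : ℝ) ^ (-(p.re + m * q)) * (‖a nk.2‖ * ‖z‖ ^ nk.2)) :=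
    hc.mul_of_nonneg hA (fun n => Real.rpow_nonneg (hx0 n).le _)
      (fun k => by positivity)
  have hs1 : Summable (fun nk : ℕ × ℕ => ‖F nk.1 nk.2‖) :=
    Summable.of_nonneg_of_le (fun _ => norm_nonneg _) hbound hprod
  refine ⟨hs1, ?_⟩
  have hFsum : Summable (fun nk : ℕ × ℕ => F nk.1 nk.2) := Summable.of_norm hs1
  have hLHS : (∑' n : ℕ, (ArithmeticFunction.moebius (n + 1) : ℂ) / ((n + 1 : ℕ) : ℂ) ^ p *
      ∑' k : ℕ, a k * (z / ((((n + 1 : ℕ) : ℝ) ^ q : ℝ) : ℂ)) ^ k) =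
      ∑' n : ℕ, ∑' k : ℕ, F n k := by
    refine tsum_congr fun n => ?_
    rw [← tsum_mul_left]
  rw [hLHS]
  have hFsum' : Summable (Function.uncurry F) := hFsum
  have h2 : ∀ k : ℕ, Summable fun n => F n k := fun k => hFsum.prod_symm.prod_factor k
  rw [← Summable.tsum_comm' (f := F) hFsum' (fun n => hFsum.prod_factor n) h2]
  refine tsum_congr fun k => ?_
  rcases lt_or_ge k m with hk | hk
  · simp [hF, ha0 k hk]
  · have hs : 1 < (p + (k : ℂ) * (q : ℂ)).re := by
      simp only [Complex.add_re, Complex.mul_re, Complex.natCast_re, Complex.ofReal_re,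
        Complex.natCast_im, Complex.ofReal_im, mul_zero, zero_mul, sub_zero]
      have : (m : ℝ) * q ≤ (k : ℝ) * q :=
        mul_le_mul_of_nonneg_right (by exact_mod_cast hk) hq
      linarith
    have hFnk : ∀ n : ℕ, F n k = a k * z ^ k *
        ((ArithmeticFunction.moebius (n + 1) : ℂ) /
          ((n + 1 : ℕ) : ℂ) ^ (p + (k : ℂ) * (q : ℂ))) := by
      intro n
      have hb0 : ((n + 1 : ℕ) : ℂ) ≠ 0 := Nat.cast_ne_zero.mpr (Nat.succ_ne_zero n)
      have hw : ((((n + 1 : ℕ) : ℝ) ^ q : ℝ) : ℂ) = ((n + 1 : ℕ) : ℂ) ^ (q : ℂ) := by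
        rw [Complex.ofReal_cpow (hx0 n).le]
        norm_num
      have hwk : (((n + 1 : ℕ) : ℂ) ^ (q : ℂ)) ^ k = ((n + 1 : ℕ) : ℂ) ^ ((k : ℂ) * (q : ℂ)) :=
        (Complex.cpow_nat_mul _ k _).symm
      have hpw : ((n + 1 : ℕ) : ℂ) ^ (p + (k : ℂ) * (q : ℂ)) =
          ((n + 1 : ℕ) : ℂ) ^ p * ((n + 1 : ℕ) : ℂ) ^ ((k : ℂ) * (q : ℂ)) :=
        Complex.cpow_add _ _ hb0
      have hb0' : ((n : ℂ) + 1) ≠ 0 := by exact_mod_cast hb0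
      have hne1 : ((n + 1 : ℕ) : ℂ) ^ p ≠ 0 := by
        simp [Complex.cpow_eq_zero_iff, hb0']
      have hne2 : ((n + 1 : ℕ) : ℂ) ^ ((k : ℂ) * (q : ℂ)) ≠ 0 := by
        simp [Complex.cpow_eq_zero_iff, hb0']
      simp only [hF, hw, div_pow, hwk, hpw]
      field_simp
    simp_rw [hFnk]
    rw [tsum_mul_left, moebius_tsum_eq_inv_zeta _ hs, div_eq_mul_inv]
    ring
end

section
/- Let u be complex with 0 < Re(u) < 1. Then ∫₀^∞ |v^{u-1} J(v)| dv is finite and Γ(u)/(1-u) = ∫₀^∞ v^{u-1} J(v) dv, where J(v) := (1 - e^{-v})/v for v ≠ 0 and J(0) := 1. -/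
open MeasureTheory Set Complex

-- Step A: inner integral in t
lemma auxA (v : ℝ) (hv : 0 < v) :
    ∫ t in Ioc (0:ℝ) 1, Complex.exp (-(v:ℂ) * t) = (((1 - Real.exp (-v)) / v : ℝ) : ℂ) := by
  rw [← intervalIntegral.integral_of_le (by norm_num : (0:ℝ) ≤ 1),
    integral_exp_mul_complex (by simpa using hv.ne')]
  have hv' : (v:ℂ) ≠ 0 := by exact_mod_cast hv.ne'
  push_cast
  rw [div_eq_div_iff (by simpa using hv.ne') hv']
  ring_nf
  simp [Complex.exp_neg]
  ring

lemma auxAr (v : ℝ) (hv : 0 < v) :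
    ∫ t in Ioc (0:ℝ) 1, Real.exp (-(v * t)) = (1 - Real.exp (-v)) / v := by
  rw [← intervalIntegral.integral_of_le (by norm_num : (0:ℝ) ≤ 1)]
  have h := intervalIntegral.integral_comp_mul_left (a := (0:ℝ)) (b := 1)
    (fun x => Real.exp (-x)) hv.ne'
  simp only [mul_zero, mul_one] at h
  rw [h, intervalIntegral.integral_comp_neg (fun x => Real.exp x)]
  simp only [neg_zero, integral_exp, smul_eq_mul]
  field_simp
  rw [Real.exp_zero]

lemma auxJ_nonneg {v : ℝ} (hv : 0 < v) : 0 ≤ (1 - Real.exp (-v)) / v := by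
  apply div_nonneg _ hv.le
  have : Real.exp (-v) ≤ 1 := Real.exp_le_one_iff.mpr (by linarith)
  linarith

lemma auxJ_le_one {v : ℝ} (hv : 0 < v) : (1 - Real.exp (-v)) / v ≤ 1 := by
  rw [div_le_one hv]
  have := Real.add_one_le_exp (-v)
  linarith

lemma auxJ_le_inv {v : ℝ} (hv : 0 < v) : (1 - Real.exp (-v)) / v ≤ 1 / v := by
  gcongr
  have := Real.exp_pos (-v)
  linarith

lemma auxD {a : ℝ} (h0 : 0 < a) (h1 : a < 1) :
    MeasureTheory.IntegrableOn
      (fun v : ℝ => v ^ (a - 1) * ((1 - Real.exp (-v)) / v)) (Ioi (0:ℝ)) := by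
  have hmeas : MeasureTheory.AEStronglyMeasurable
      (fun v : ℝ => v ^ (a - 1) * ((1 - Real.exp (-v)) / v)) := by
    apply Measurable.aestronglyMeasurable
    have h1 : Measurable (fun v : ℝ => v ^ (a-1)) := by measurability
    exact h1.mul
      ((measurable_const.sub (Real.measurable_exp.comp measurable_neg)).div measurable_id)
  rw [← Ioc_union_Ioi_eq_Ioi (zero_le_one (α := ℝ)), MeasureTheory.integrableOn_union]
  constructor
  · have hbase : MeasureTheory.IntegrableOn (fun v : ℝ => v ^ (a - 1)) (Ioc (0:ℝ) 1) := by
      rw [← intervalIntegrable_iff_integrableOn_Ioc_of_le zero_le_one]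
      exact intervalIntegral.intervalIntegrable_rpow' (by linarith)
    apply hbase.mono' (hmeas.restrict)
    filter_upwards [MeasureTheory.self_mem_ae_restrict measurableSet_Ioc] with v hv
    have hv0 : 0 < v := hv.1
    rw [Real.norm_eq_abs, abs_mul, _root_.abs_of_nonneg (Real.rpow_nonneg hv0.le _),
      _root_.abs_of_nonneg (auxJ_nonneg hv0)]
    calc v ^ (a-1) * ((1 - Real.exp (-v)) / v) ≤ v ^ (a-1) * 1 :=
          mul_le_mul_of_nonneg_left (auxJ_le_one hv0) (Real.rpow_nonneg hv0.le _)
      _ = v ^ (a-1) := mul_one _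
  · have hbase : MeasureTheory.IntegrableOn (fun v : ℝ => v ^ (a - 2)) (Ioi (1:ℝ)) :=
      integrableOn_Ioi_rpow_of_lt (by linarith) zero_lt_one
    apply hbase.mono' (hmeas.restrict)
    filter_upwards [MeasureTheory.self_mem_ae_restrict measurableSet_Ioi] with v hv
    have hv0 : (0:ℝ) < v := lt_trans zero_lt_one hv
    rw [Real.norm_eq_abs, abs_mul, _root_.abs_of_nonneg (Real.rpow_nonneg hv0.le _),
      _root_.abs_of_nonneg (auxJ_nonneg hv0)]
    calc v ^ (a-1) * ((1 - Real.exp (-v)) / v) ≤ v ^ (a-1) * (1/v) :=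
          mul_le_mul_of_nonneg_left (auxJ_le_inv hv0) (Real.rpow_nonneg hv0.le _)
      _ = v ^ (a-2) := by
          rw [show a - 2 = (a-1) + (-1) by ring, Real.rpow_add hv0, Real.rpow_neg_one, one_div]

/-- Lemma 3.4: Mellin transform representation of Γ(u)/(1-u) on 0 < Re u < 1,
with J(v) = (1 - e^(-v))/v. -/
theorem gamma_div_one_sub_mellin (u : ℂ) (h0 : 0 < u.re) (h1 : u.re < 1) :
    MeasureTheory.IntegrableOn
        (fun v : ℝ => (v : ℂ) ^ (u - 1) * (((1 - Real.exp (-v)) / v : ℝ) : ℂ))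
        (Set.Ioi 0) ∧
      Complex.Gamma u / (1 - u) =
        ∫ v in Set.Ioi (0:ℝ), (v : ℂ) ^ (u - 1) * (((1 - Real.exp (-v)) / v : ℝ) : ℂ) := by
  set μ := volume.restrict (Ioi (0:ℝ)) with hμ
  set ν := volume.restrict (Ioc (0:ℝ) 1) with hν
  set F : ℝ × ℝ → ℂ := fun p => (p.1 : ℂ) ^ (u - 1) * Complex.exp (-(p.1 : ℂ) * p.2) with hFdef
  -- measurability on the product
  have hmeasF : MeasureTheory.AEStronglyMeasurable F (μ.prod ν) := by
    rw [hμ, hν, MeasureTheory.Measure.prod_restrict]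
    refine (ContinuousOn.aestronglyMeasurable ?_ (measurableSet_Ioi.prod measurableSet_Ioc))
    refine continuousOn_of_forall_continuousAt fun p hp => ?_
    have h1 : ContinuousAt (fun p : ℝ × ℝ => (p.1 : ℂ) ^ (u - 1)) p :=
      (continuousAt_ofReal_cpow_const p.1 (u - 1) (Or.inr hp.1.ne')).comp continuousAt_fst
    have h2 : Continuous fun p : ℝ × ℝ => Complex.exp (-(p.1 : ℂ) * p.2) := by
      fun_prop
    exact h1.mul h2.continuousAt
  -- norm of F
  have hnorm : ∀ v t : ℝ, 0 < v → ‖F (v, t)‖ = v ^ (u.re - 1) * Real.exp (-(v * t)) := by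
    intro v t hv
    rw [hFdef]
    simp only [norm_mul, Complex.norm_exp,
      Complex.norm_cpow_eq_rpow_re_of_pos hv]
    simp [Complex.sub_re, Complex.mul_re]
  -- Fubini integrability
  have hprod : MeasureTheory.Integrable F (μ.prod ν) := by
    rw [MeasureTheory.integrable_prod_iff hmeasF]
    constructor
    · filter_upwards [MeasureTheory.self_mem_ae_restrict measurableSet_Ioi] with v hv
      have : Continuous (fun t : ℝ => (v:ℂ) ^ (u-1) * Complex.exp (-(v:ℂ) * t)) := by
        fun_prop
      exact this.integrableOn_Ioc
    · apply (auxD h0 h1).congr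
      filter_upwards [MeasureTheory.self_mem_ae_restrict measurableSet_Ioi] with v hv
      have : ∫ t, ‖F (v, t)‖ ∂ν = ∫ t in Ioc (0:ℝ) 1, v ^ (u.re - 1) * Real.exp (-(v * t)) :=
        MeasureTheory.integral_congr_ae (Filter.Eventually.of_forall fun t => hnorm v t hv)
      rw [this, MeasureTheory.integral_const_mul, auxAr v hv]
  -- identification of the inner t-integral
  have hinner : ∀ v : ℝ, v ∈ Ioi (0:ℝ) →
      (∫ t, F (v, t) ∂ν) = (v : ℂ) ^ (u - 1) * (((1 - Real.exp (-v)) / v : ℝ) : ℂ) := by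
    intro v hv
    rw [hν]
    calc (∫ t in Ioc (0:ℝ) 1, (v:ℂ) ^ (u-1) * Complex.exp (-(v:ℂ) * t))
        = (v:ℂ) ^ (u-1) * ∫ t in Ioc (0:ℝ) 1, Complex.exp (-(v:ℂ) * t) :=
          MeasureTheory.integral_const_mul _ _
      _ = _ := by rw [auxA v hv]
  constructor
  · exact (hprod.integral_prod_left).congr
      ((MeasureTheory.ae_restrict_iff' measurableSet_Ioi).mpr
        (Filter.Eventually.of_forall hinner))
  · have hswap := MeasureTheory.integral_integral_swap (f := fun v t => F (v, t))
      (by exact hprod)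
    have lhs_eq : ∫ v in Ioi (0:ℝ), (v : ℂ) ^ (u - 1) * (((1 - Real.exp (-v)) / v : ℝ) : ℂ)
        = ∫ v, ∫ t, F (v, t) ∂ν ∂μ :=
      (MeasureTheory.integral_congr_ae ((MeasureTheory.ae_restrict_iff' measurableSet_Ioi).mpr
        (Filter.Eventually.of_forall hinner))).symm
    rw [lhs_eq, hswap]
    -- inner v-integral for fixed t
    have hv_int : ∀ t : ℝ, t ∈ Ioc (0:ℝ) 1 →
        (∫ v, F (v, t) ∂μ) = Complex.Gamma u * (t : ℂ) ^ (-u) := by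
      intro t ht
      rw [hμ]
      have : ∀ v : ℝ, v ∈ Ioi (0:ℝ) →
          F (v, t) = (v:ℂ) ^ (u - 1) * Complex.exp (-((t:ℂ) * (v:ℂ))) := by
        intro v hv
        rw [hFdef]
        push_cast
        ring_nf
      rw [MeasureTheory.setIntegral_congr_fun measurableSet_Ioi this,
        integral_cpow_mul_exp_neg_mul_Ioi (by simpa using h0) ht.1]
      rw [one_div, Complex.inv_cpow _ _ (by
          rw [Complex.arg_ofReal_of_nonneg ht.1.le]; exact Real.pi_ne_zero.symm),
        ← Complex.cpow_neg, mul_comm]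
    rw [MeasureTheory.integral_congr_ae ((MeasureTheory.ae_restrict_iff' measurableSet_Ioc).mpr
      (Filter.Eventually.of_forall hv_int)), MeasureTheory.integral_const_mul,
      ← intervalIntegral.integral_of_le (zero_le_one (α := ℝ)),
      integral_cpow (Or.inl (by simpa using h1))]
    have hne : 1 - u ≠ 0 := by
      intro h
      have : u = 1 := by linear_combination -h
      rw [this] at h1; simp at h1
    rw [show (-u + 1) = 1 - u by ring]
    push_cast
    rw [Complex.one_cpow, Complex.zero_cpow hne]
    field_simp
    ring
end

section
/- Let p, z be complex with either (Re(p) > 0 and Re(z) > 0) or (0 < Re(p) < 1 and Re(z) ≥ 0, z ≠ 0). Then (1/Γ(p)) e^{-z} ∫₀^∞ (j^{p-1}/(1+j)) e^{-zj} dj = Γ(1-p, z), where Γ(q, z) := ∫_z^∞ t^{q-1} e^{-t} dt is the upper incomplete gamma function. -/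
open MeasureTheory Set Filter Complex

lemma contOn_cpow (w : ℂ) : ContinuousOn (fun t : ℝ => (t:ℂ) ^ w) (Set.Ioi 0) :=
  fun x hx => (continuousAt_ofReal_cpow_const x w (Or.inr (ne_of_gt hx))).continuousWithinAt

lemma aux_int {a c : ℝ} (ha : -1 < a) (hc : 0 < c) :
    IntegrableOn (fun t : ℝ => t ^ a * Real.exp (-(c * t))) (Set.Ioi 0) := by
  have := integrableOn_rpow_mul_exp_neg_mul_rpow ha one_pos hc
  simpa [Real.rpow_one, neg_mul] using this

lemma norm_aux {w : ℂ} {t : ℝ} (ht : 0 < t) (b : ℂ) :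
    ‖(t:ℂ) ^ w * Complex.exp (-(b * t))‖ = t ^ w.re * Real.exp (-(b.re * t)) := by
  rw [norm_mul,
    Complex.norm_cpow_eq_rpow_re_of_pos ht, Complex.norm_exp]
  congr 2
  simp

lemma cint {p b : ℂ} (hp : 0 < p.re) (hb : 0 < b.re) :
    IntegrableOn (fun t : ℝ => (t:ℂ) ^ (p - 1) * Complex.exp (-(b * t))) (Set.Ioi 0) := by
  refine (aux_int (a := p.re - 1) (by linarith) hb).mono' ?_ ?_
  · exact (((contOn_cpow (p-1)).mul ((Complex.continuous_exp.comp
      (by continuity : Continuous fun t : ℝ => -(b * t))).continuousOn)).aestronglyMeasurable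
      measurableSet_Ioi)
  · filter_upwards [ae_restrict_mem measurableSet_Ioi] with t ht
    rw [norm_aux ht b]
    exact le_of_eq (by simp [Complex.sub_re, Complex.one_re])

lemma hF_diff {p : ℂ} (hp : 0 < p.re) {b0 : ℂ} (hb0 : 0 < b0.re) :
    HasDerivAt (fun b : ℂ => ∫ t in Set.Ioi (0:ℝ), (t:ℂ) ^ (p - 1) * Complex.exp (-(b * t)))
      (∫ t in Set.Ioi (0:ℝ), -((t:ℂ) ^ p * Complex.exp (-(b0 * t)))) b0 := by
  have hmeas : ∀ b : ℂ, AEStronglyMeasurable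
      (fun t : ℝ => (t:ℂ) ^ (p - 1) * Complex.exp (-(b * t)))
      (volume.restrict (Set.Ioi 0)) := fun b =>
    (((contOn_cpow (p-1)).mul ((Complex.continuous_exp.comp
      (by continuity : Continuous fun t : ℝ => -(b * t))).continuousOn)).aestronglyMeasurable
      measurableSet_Ioi)
  have hmeas' : AEStronglyMeasurable
      (fun t : ℝ => -((t:ℂ) ^ p * Complex.exp (-(b0 * t))))
      (volume.restrict (Set.Ioi 0)) :=
    (((contOn_cpow p).mul ((Complex.continuous_exp.comp
      (by continuity : Continuous fun t : ℝ => -(b0 * t))).continuousOn)).aestronglyMeasurable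
      measurableSet_Ioi).neg
  have hball : ∀ b ∈ Metric.ball b0 (b0.re/2), b0.re/2 ≤ b.re := by
    intro b hbb
    have h1 : |(b - b0).re| ≤ ‖b - b0‖ := Complex.abs_re_le_norm _
    have h2 : ‖b - b0‖ < b0.re/2 := mem_ball_iff_norm.mp hbb
    have h3 : -(b0.re/2) < (b - b0).re := by
      rcases abs_lt.mp (lt_of_le_of_lt h1 h2) with ⟨h, _⟩; linarith
    simp only [Complex.sub_re] at h3; linarith
  have key := hasDerivAt_integral_of_dominated_loc_of_deriv_le
    (F := fun (b : ℂ) (t : ℝ) => (t:ℂ) ^ (p - 1) * Complex.exp (-(b * t)))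
    (F' := fun (b : ℂ) (t : ℝ) => -((t:ℂ) ^ p * Complex.exp (-(b * t))))
    (bound := fun t : ℝ => t ^ p.re * Real.exp (-(b0.re/2 * t)))
    (μ := volume.restrict (Set.Ioi 0)) (Metric.ball_mem_nhds b0 (half_pos hb0))
    (Filter.Eventually.of_forall hmeas) (cint hp hb0) hmeas' ?_ ?_ ?_
  · exact key.2
  · -- bound
    filter_upwards [ae_restrict_mem measurableSet_Ioi] with t ht b hbb
    rw [norm_neg, norm_aux ht b]
    have := hball b hbb
    gcongr
    · exact Real.rpow_nonneg (le_of_lt ht) _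
    · exact le_of_lt ht
  · -- bound integrable
    exact aux_int (by linarith) (half_pos hb0)
  · -- h_diff
    filter_upwards [ae_restrict_mem measurableSet_Ioi] with t ht b hbb
    have h1 : HasDerivAt (fun b : ℂ => -(b * t)) (-(t:ℂ)) b := by
      exact (hasDerivAt_mul_const (t:ℂ)).neg
    have h2 := ((h1.cexp).const_mul ((t:ℂ) ^ (p - 1)))
    refine h2.congr_deriv ?_
    have htne : (t:ℂ) ≠ 0 := by
      exact_mod_cast ne_of_gt ht
    have hpow : (t:ℂ) ^ (p - 1) * (t:ℂ) = (t:ℂ) ^ p := by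
      nth_rewrite 2 [← Complex.cpow_one (t:ℂ)]
      rw [← Complex.cpow_add _ _ htne]
      ring_nf
    rw [← hpow]
    ring

lemma lemA {p : ℂ} (hp : 0 < p.re) {b : ℂ} (hb : 0 < b.re) :
    (∫ t in Set.Ioi (0:ℝ), (t:ℂ) ^ (p - 1) * Complex.exp (-(b * t)))
      = Complex.Gamma p * b ^ (-p) := by
  have hUo : IsOpen {w : ℂ | 0 < w.re} := isOpen_lt continuous_const Complex.continuous_re
  have hF : AnalyticOnNhd ℂ
      (fun w : ℂ => ∫ t in Set.Ioi (0:ℝ), (t:ℂ) ^ (p - 1) * Complex.exp (-(w * t)))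
      {w : ℂ | 0 < w.re} :=
    DifferentiableOn.analyticOnNhd
      (fun w0 hw0 => ((hF_diff hp hw0).differentiableAt).differentiableWithinAt) hUo
  have hG : AnalyticOnNhd ℂ (fun w : ℂ => Complex.Gamma p * w ^ (-p)) {w : ℂ | 0 < w.re} :=
    DifferentiableOn.analyticOnNhd
      (fun w0 hw0 => (((differentiableAt_id).cpow (differentiableAt_const _)
        (Complex.mem_slitPlane_iff.mpr (Or.inl hw0))).const_mul _).differentiableWithinAt) hUo
  have hpre : IsPreconnected {w : ℂ | 0 < w.re} := (convex_halfSpace_re_gt 0).isPreconnected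
  have key : ∀ r : ℝ, 0 < r →
      (∫ t in Set.Ioi (0:ℝ), (t:ℂ) ^ (p - 1) * Complex.exp (-((r:ℂ) * t)))
        = Complex.Gamma p * (r:ℂ) ^ (-p) := by
    intro r hr
    have h1 := Complex.integral_cpow_mul_exp_neg_mul_Ioi hp hr
    have h2 : (∫ t in Set.Ioi (0:ℝ), (t:ℂ) ^ (p - 1) * Complex.exp (-((r:ℂ) * t)))
        = ∫ t in Set.Ioi (0:ℝ), (t:ℂ) ^ (p - 1) * Complex.exp (-(r * t)) := by
      norm_cast
    rw [h2, h1, mul_comm]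
    congr 1
    have harg : (r:ℂ).arg ≠ Real.pi := by
      rw [Complex.arg_ofReal_of_nonneg (le_of_lt hr)]
      exact Ne.symm Real.pi_ne_zero
    rw [one_div, Complex.inv_cpow _ _ harg, ← Complex.cpow_neg]
  have hseq : Filter.Tendsto (fun n : ℕ => ((1 + ((n:ℝ)+1)⁻¹ : ℝ) : ℂ)) Filter.atTop
      (nhdsWithin 1 {(1:ℂ)}ᶜ) := by
    apply tendsto_nhdsWithin_of_tendsto_nhds_of_eventually_within
    · have h0 : Filter.Tendsto (fun n : ℕ => (1 + ((n:ℝ)+1)⁻¹ : ℝ)) Filter.atTop (nhds 1) := by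
        have := tendsto_one_div_add_atTop_nhds_zero_nat (𝕜 := ℝ)
        simpa [one_div] using tendsto_const_nhds.add this
      have := (Complex.continuous_ofReal.tendsto 1).comp h0
      exact_mod_cast this
    · filter_upwards with n
      simp only [Set.mem_compl_iff, Set.mem_singleton_iff]
      intro hcon
      have : (1 + ((n:ℝ)+1)⁻¹ : ℝ) = 1 := by exact_mod_cast hcon
      have hpos : (0:ℝ) < ((n:ℝ)+1)⁻¹ := by positivity
      linarith
  have hfreq : ∃ᶠ w in nhdsWithin (1:ℂ) {(1:ℂ)}ᶜ,
      (∫ t in Set.Ioi (0:ℝ), (t:ℂ) ^ (p - 1) * Complex.exp (-(w * t)))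
        = Complex.Gamma p * w ^ (-p) :=
    hseq.frequently (Filter.Frequently.of_forall fun n => key _ (by positivity))
  exact hF.eqOn_of_preconnected_of_frequently_eq hG hpre (by simp : (1:ℂ) ∈ {w : ℂ | 0 < w.re})
    hfreq hb

lemma rint {c : ℝ} (hc : 0 < c) : (∫ s in Set.Ioi (0:ℝ), Real.exp (-(c * s))) = c⁻¹ := by
  have := Real.integral_rpow_mul_exp_neg_mul_Ioi (a := 1) one_pos hc
  simpa [Real.Gamma_one, Real.rpow_one, one_div] using this

lemma cint1 {b : ℂ} (hb : 0 < b.re) :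
    IntegrableOn (fun s : ℝ => Complex.exp (-(b * s))) (Set.Ioi 0) := by
  have := cint (p := 1) (by simp) hb
  rw [show (1 - 1 : ℂ) = 0 by ring] at this
  simpa [Complex.cpow_zero] using this

lemma lemA1 {b : ℂ} (hb : 0 < b.re) :
    (∫ s in Set.Ioi (0:ℝ), Complex.exp (-(b * s))) = b⁻¹ := by
  have := lemA (p := 1) (by simp) hb
  rw [show (1 - 1 : ℂ) = 0 by ring] at this
  simpa [Complex.cpow_zero, Complex.Gamma_one, Complex.cpow_neg_one] using this

lemma contOn_rpow (a : ℝ) : ContinuousOn (fun j : ℝ => j ^ a) (Set.Ioi 0) :=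
  fun x hx => (Real.continuousAt_rpow_const x a (Or.inl (ne_of_gt hx))).continuousWithinAt

lemma contOn_div (a : ℝ) : ContinuousOn (fun j : ℝ => j ^ a / (1 + j)) (Set.Ioi 0) :=
  (contOn_rpow a).div (continuous_const.add continuous_id).continuousOn
    (fun x hx => by have : (0:ℝ) < x := hx; positivity)

lemma int2 {a : ℝ} (ha : 0 < a) (ha1 : a < 1) :
    IntegrableOn (fun j : ℝ => j ^ (a - 1) / (1 + j)) (Set.Ioi 0) := by
  have h01 : IntegrableOn (fun j : ℝ => j ^ (a - 1) / (1 + j)) (Set.Ioc 0 1) := by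
    refine ((intervalIntegrable_iff_integrableOn_Ioc_of_le zero_le_one).mp
      (intervalIntegral.intervalIntegrable_rpow' (r := a - 1) (by linarith))).mono' ?_ ?_
    · exact ((contOn_div (a-1)).mono Set.Ioc_subset_Ioi_self).aestronglyMeasurable
        measurableSet_Ioc
    · filter_upwards [ae_restrict_mem measurableSet_Ioc] with j hj
      have hj0 : 0 < j := hj.1
      rw [Real.norm_eq_abs, _root_.abs_of_nonneg (by positivity)]
      rw [div_le_iff₀ (by linarith : (0:ℝ) < 1 + j)]
      nlinarith [mul_nonneg (Real.rpow_nonneg hj0.le (a-1)) hj0.le]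
  have h1i : IntegrableOn (fun j : ℝ => j ^ (a - 1) / (1 + j)) (Set.Ioi 1) := by
    refine (integrableOn_Ioi_rpow_of_lt (show a - 2 < -1 by linarith) one_pos).mono' ?_ ?_
    · exact ((contOn_div (a-1)).mono (t := Set.Ioi 1) (fun x (hx : (1:ℝ) < x) => (lt_trans one_pos hx : (0:ℝ) < x))).aestronglyMeasurable
        measurableSet_Ioi
    · filter_upwards [ae_restrict_mem measurableSet_Ioi] with j hj
      have hj1 : (1:ℝ) < j := hj
      have hj0 : (0:ℝ) < j := lt_trans one_pos hj1
      rw [Real.norm_eq_abs, _root_.abs_of_nonneg (by positivity)]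
      calc j ^ (a-1) / (1 + j) ≤ j ^ (a-1) / j := by
            gcongr
            · linarith
        _ = j ^ (a-2) := by
            rw [div_eq_mul_inv, ← Real.rpow_neg_one j, ← Real.rpow_add hj0]
            ring_nf
  have hu : Set.Ioc (0:ℝ) 1 ∪ Set.Ioi 1 = Set.Ioi 0 := Set.Ioc_union_Ioi_eq_Ioi zero_le_one
  rw [← hu]
  exact h01.union h1i

noncomputable def fJS (p z : ℂ) (j s : ℝ) : ℂ :=
  ((j:ℂ) ^ (p - 1) * Complex.exp (-(z * j))) * Complex.exp (-((1 + (j:ℂ)) * s))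

lemma contOn_g (a c : ℝ) :
    ContinuousOn (fun j : ℝ => (j ^ a * Real.exp (-(c * j))) * (1 + j)⁻¹) (Set.Ioi 0) :=
  ((contOn_rpow a).mul (Real.continuous_exp.comp
      (continuous_const.mul continuous_id).neg).continuousOn).mul
    (((continuous_const.add continuous_id).continuousOn).inv₀
      (fun x hx => by have : (0:ℝ) < x := hx; show (1:ℝ) + x ≠ 0; positivity))

/-- Lemma 4.1: (1/Γ(p)) e^(-z) I(p, z) = Γ(1-p, z), where
I(p, z) = ∫₀^∞ (j^(p-1)/(1+j)) e^(-zj) dj and the upper incomplete gamma function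
is Γ(1-p, z) = ∫_z^∞ t^(-p) e^(-t) dt, parametrized as t = z + s, s ∈ (0, ∞). -/
theorem I_eq_incomplete_gamma (p z : ℂ)
    (h : (0 < p.re ∧ 0 < z.re) ∨ (0 < p.re ∧ p.re < 1 ∧ 0 ≤ z.re ∧ z ≠ 0)) :
    (1 / Complex.Gamma p) * Complex.exp (-z) *
        (∫ j in Set.Ioi (0:ℝ), (j : ℂ) ^ (p - 1) / (1 + (j : ℂ)) * Complex.exp (-z * j)) =
      ∫ s in Set.Ioi (0:ℝ), (z + (s : ℂ)) ^ (-p) * Complex.exp (-(z + (s : ℂ))) := by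
  obtain ⟨hp, hz0, hcase⟩ : 0 < p.re ∧ 0 ≤ z.re ∧ (0 < z.re ∨ p.re < 1) := by
    rcases h with ⟨h1, h2⟩ | ⟨h1, h2, h3, _⟩
    exacts [⟨h1, h2.le, Or.inl h2⟩, ⟨h1, h3, Or.inr h2⟩]
  have hΓ : Complex.Gamma p ≠ 0 := by
    apply Complex.Gamma_ne_zero
    intro m hm
    rw [hm] at hp
    simp only [Complex.neg_re, Complex.natCast_re] at hp
    have : (0:ℝ) ≤ m := Nat.cast_nonneg m
    linarith
  set μ : MeasureTheory.Measure ℝ := MeasureTheory.volume.restrict (Set.Ioi 0) with hμ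
  have hre1j : ∀ j : ℝ, 0 < j → 0 < ((1:ℂ) + j).re := by
    intro j hj; simp only [Complex.add_re, Complex.one_re, Complex.ofReal_re]; linarith
  have hfmeas : MeasureTheory.AEStronglyMeasurable (fun q : ℝ × ℝ => fJS p z q.1 q.2)
      (μ.prod μ) := by
    rw [hμ, MeasureTheory.Measure.prod_restrict]
    refine ContinuousOn.aestronglyMeasurable ?_ (measurableSet_Ioi.prod measurableSet_Ioi)
    apply ContinuousOn.mul
    · apply ContinuousOn.mul
      · exact (contOn_cpow (p - 1)).comp continuous_fst.continuousOn (fun q hq => hq.1)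
      · exact (Complex.continuous_exp.comp
          ((continuous_const.mul (Complex.continuous_ofReal.comp continuous_fst)).neg)).continuousOn
    · exact (Complex.continuous_exp.comp
        (((continuous_const.add (Complex.continuous_ofReal.comp continuous_fst)).mul
          (Complex.continuous_ofReal.comp continuous_snd)).neg)).continuousOn
  have hnorm : ∀ j ∈ Set.Ioi (0:ℝ), ∀ s : ℝ, ‖fJS p z j s‖
      = (j ^ (p.re - 1) * Real.exp (-(z.re * j))) * Real.exp (-((1 + j) * s)) := by
    intro j hj s
    rw [fJS, norm_mul, norm_aux hj z]
    congr 1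
    rw [Complex.norm_exp]
    congr 1
    simp
  have hfint : MeasureTheory.Integrable (fun q : ℝ × ℝ => fJS p z q.1 q.2) (μ.prod μ) := by
    rw [MeasureTheory.integrable_prod_iff hfmeas]
    constructor
    · filter_upwards [MeasureTheory.ae_restrict_mem measurableSet_Ioi] with j hj
      exact (cint1 (hre1j j hj)).const_mul _
    · have hgc : ∀ j ∈ Set.Ioi (0:ℝ), (∫ s, ‖fJS p z j s‖ ∂μ)
          = (j ^ (p.re - 1) * Real.exp (-(z.re * j))) * (1 + j)⁻¹ := by
        intro j hj
        have hj' : (0:ℝ) < j := hj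
        simp_rw [hnorm j hj]
        rw [hμ, MeasureTheory.integral_const_mul, rint (by linarith : (0:ℝ) < 1 + j)]
      have hG : MeasureTheory.Integrable
          (fun j : ℝ => (j ^ (p.re - 1) * Real.exp (-(z.re * j))) * (1 + j)⁻¹) μ := by
        rcases hcase with hzpos | hp1
        · refine (aux_int (a := p.re - 1) (by linarith) hzpos).mono' ?_ ?_
          · exact (contOn_g (p.re - 1) z.re).aestronglyMeasurable measurableSet_Ioi
          · filter_upwards [MeasureTheory.ae_restrict_mem measurableSet_Ioi] with j hj
            have hj' : (0:ℝ) < j := hj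
            rw [Real.norm_eq_abs, _root_.abs_of_nonneg (by positivity)]
            have h1 : (1 + j)⁻¹ ≤ 1 := by
              rw [inv_le_one_iff₀]; right; linarith
            nlinarith [mul_nonneg (Real.rpow_nonneg hj'.le (p.re - 1))
              (Real.exp_nonneg (-(z.re * j)))]
        · refine (int2 hp hp1).mono' ?_ ?_
          · exact (contOn_g (p.re - 1) z.re).aestronglyMeasurable measurableSet_Ioi
          · filter_upwards [MeasureTheory.ae_restrict_mem measurableSet_Ioi] with j hj
            have hj' : (0:ℝ) < j := hj
            rw [Real.norm_eq_abs, _root_.abs_of_nonneg (by positivity)]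
            have h1 : Real.exp (-(z.re * j)) ≤ 1 := by
              rw [Real.exp_le_one_iff]; nlinarith
            have h2 : (0:ℝ) < 1 + j := by linarith
            rw [div_eq_mul_inv]
            nlinarith [mul_nonneg (Real.rpow_nonneg hj'.le (p.re - 1)) (inv_nonneg.mpr h2.le),
              Real.exp_nonneg (-(z.re * j)), inv_nonneg.mpr h2.le,
              Real.rpow_nonneg hj'.le (p.re - 1)]
      refine hG.congr ((MeasureTheory.ae_restrict_iff' measurableSet_Ioi).mpr
        (Filter.Eventually.of_forall fun j hj => (hgc j hj).symm))
  have hswap := MeasureTheory.integral_integral_swap (f := fun j s => fJS p z j s) hfint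
  have hL : (∫ j in Set.Ioi (0:ℝ), (j : ℂ) ^ (p - 1) / (1 + (j : ℂ)) * Complex.exp (-z * j))
      = ∫ j, (∫ s, fJS p z j s ∂μ) ∂μ := by
    refine MeasureTheory.setIntegral_congr_fun measurableSet_Ioi (fun j hj => ?_)
    rw [show (∫ s, fJS p z j s ∂μ)
        = ((j:ℂ) ^ (p - 1) * Complex.exp (-(z * j))) * ((1:ℂ) + j)⁻¹ by
      simp only [fJS]
      rw [hμ, MeasureTheory.integral_const_mul, lemA1 (hre1j j hj)]]
    rw [neg_mul]
    ring
  have hR : (∫ s, (∫ j, fJS p z j s ∂μ) ∂μ)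
      = ∫ s in Set.Ioi (0:ℝ), Complex.exp (-(s:ℂ)) * (Complex.Gamma p * (z + s) ^ (-p)) := by
    refine MeasureTheory.setIntegral_congr_fun measurableSet_Ioi (fun s hs => ?_)
    have hs' : (0:ℝ) < s := hs
    have hfs : ∀ j : ℝ, fJS p z j s
        = Complex.exp (-(s:ℂ)) * ((j:ℂ) ^ (p - 1) * Complex.exp (-((z + s) * j))) := by
      intro j
      rw [fJS]
      have he : Complex.exp (-(z * j)) * Complex.exp (-((1 + (j:ℂ)) * s))
          = Complex.exp (-(s:ℂ)) * Complex.exp (-((z + s) * j)) := by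
        rw [← Complex.exp_add, ← Complex.exp_add]
        congr 1
        ring
      calc ((j:ℂ) ^ (p - 1) * Complex.exp (-(z * j))) * Complex.exp (-((1 + (j:ℂ)) * s))
          = (j:ℂ) ^ (p - 1) * (Complex.exp (-(z * j)) * Complex.exp (-((1 + (j:ℂ)) * s))) := by
            ring
        _ = Complex.exp (-(s:ℂ)) * ((j:ℂ) ^ (p - 1) * Complex.exp (-((z + s) * j))) := by
            rw [he]; ring
    simp_rw [hfs]
    rw [hμ, MeasureTheory.integral_const_mul, lemA hp (by
      simp only [Complex.add_re, Complex.ofReal_re]; linarith : 0 < (z + (s:ℂ)).re)]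
  rw [hL, hswap, hR, ← MeasureTheory.integral_const_mul]
  refine MeasureTheory.setIntegral_congr_fun measurableSet_Ioi (fun s hs => ?_)
  rw [show -(z + (s:ℂ)) = -z + -(s:ℂ) by ring, Complex.exp_add]
  field_simp
end

section
/- If Re(β) > 0, then for every complex z, φ(1 + β, z) = (1/Γ(β)) ∫₀¹ (1-j)^{β-1} e^{zj} dj, where φ(B, z) := ∑_{k ≥ 0} z^k / Γ(B + k). -/
open MeasureTheory Set Complex Nat

lemma norm_cpow_le_rpow (x : ℝ) (hx : 0 ≤ x) (w : ℂ) : ‖(x:ℂ) ^ w‖ ≤ x ^ w.re := by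
  rcases hx.lt_or_eq with h | h
  · rw [Complex.norm_cpow_eq_rpow_re_of_pos h]
  · rw [← h]
    rcases eq_or_ne w 0 with hw | hw
    · simp [hw]
    · rw [Complex.ofReal_zero, Complex.zero_cpow hw]
      simp [Real.rpow_nonneg le_rfl]

/-- Euler integral representation: for Re β > 0,
φ(1+β, z) = (1/Γ(β)) ∫₀¹ (1-j)^(β-1) e^(zj) dj. -/
theorem phi_integral_representation (β : ℂ) (hβ : 0 < β.re) (z : ℂ) :
    (∑' k : ℕ, z ^ k / Complex.Gamma (1 + β + k)) =
      (1 / Complex.Gamma β) *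
        ∫ j in (0:ℝ)..1, ((1 - j : ℝ) : ℂ) ^ (β - 1) * Complex.exp (z * j) := by
  have hΓβ : Complex.Gamma β ≠ 0 := by
    apply Complex.Gamma_ne_zero
    intro m hm
    rw [hm] at hβ
    simp only [neg_re, natCast_re] at hβ
    have : (0:ℝ) ≤ (m:ℝ) := m.cast_nonneg
    linarith
  set F : ℕ → ℝ → ℂ := fun k j =>
    z ^ k / k ! * ((j:ℂ) ^ ((k:ℂ) + 1 - 1) * (1 - (j:ℂ)) ^ (β - 1)) with hF
  have huk : ∀ k : ℕ, 0 < ((k:ℂ) + 1).re := by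
    intro k; simp; positivity
  have hInt : ∀ k, IntervalIntegrable (F k) volume 0 1 := fun k =>
    (Complex.betaIntegral_convergent (huk k) hβ).const_mul _
  have hIoc : ∀ k, Integrable (F k) (volume.restrict (Ioc (0:ℝ) 1)) := fun k =>
    (intervalIntegrable_iff_integrableOn_Ioc_of_le zero_le_one).mp (hInt k)
  -- dominating function
  set g : ℝ → ℝ := fun j => (1 - j) ^ (β.re - 1) with hg
  have hgi : IntervalIntegrable g volume 0 1 := by
    have := (intervalIntegral.intervalIntegrable_rpow' (a := 0) (b := 1) (by linarith : (-1:ℝ) < β.re - 1)).comp_sub_left 1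
    simpa [hg] using this.symm
  have hgIoc : Integrable g (volume.restrict (Ioc (0:ℝ) 1)) :=
    (intervalIntegrable_iff_integrableOn_Ioc_of_le zero_le_one).mp hgi
  -- norm bound
  have hbound : ∀ k, (∫ j in Ioc (0:ℝ) 1, ‖F k j‖) ≤ ‖z‖ ^ k / k ! * ∫ j in Ioc (0:ℝ) 1, g j := by
    intro k
    rw [← MeasureTheory.integral_const_mul]
    apply integral_mono_ae (hIoc k).norm (hgIoc.const_mul _)
    refine (ae_restrict_iff' measurableSet_Ioc).mpr (Filter.Eventually.of_forall fun j hj => ?_)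
    have hj0 : 0 < j := hj.1
    have hj1 : j ≤ 1 := hj.2
    have h1j : (0:ℝ) ≤ 1 - j := by linarith
    simp only [hF, norm_mul, norm_div]
    have e1 : ‖(j:ℂ) ^ ((k:ℂ) + 1 - 1)‖ ≤ 1 := by
      rw [add_sub_cancel_right, Complex.cpow_natCast]
      simp only [norm_pow, Complex.norm_real, Real.norm_eq_abs, abs_of_pos hj0]
      exact pow_le_one₀ hj0.le hj1
    have e2 : ‖(1 - (j:ℂ)) ^ (β - 1)‖ ≤ (1 - j) ^ (β.re - 1) := by
      have : (1 - (j:ℂ)) = ((1 - j : ℝ) : ℂ) := by push_cast; ring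
      rw [this]
      simpa using norm_cpow_le_rpow (1 - j) h1j (β - 1)
    calc ‖z ^ k‖ / ‖(k ! : ℂ)‖ * (‖(j:ℂ) ^ ((k:ℂ) + 1 - 1)‖ * ‖(1 - (j:ℂ)) ^ (β - 1)‖)
        ≤ ‖z ^ k‖ / ‖(k ! : ℂ)‖ * (1 * ((1 - j) ^ (β.re - 1))) := by
          apply mul_le_mul_of_nonneg_left (mul_le_mul e1 e2 (norm_nonneg _) (by norm_num)) (by positivity)
      _ = ‖z‖ ^ k / k ! * g j := by
          simp [hg, norm_pow]
  have hsum : Summable fun k => ∫ j in Ioc (0:ℝ) 1, ‖F k j‖ := by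
    refine Summable.of_nonneg_of_le (fun k => integral_nonneg fun j => norm_nonneg _) hbound ?_
    exact (Real.summable_pow_div_factorial ‖z‖).mul_right _
  have hswap := MeasureTheory.integral_tsum_of_summable_integral_norm hIoc hsum
  -- pointwise tsum
  have hpt : ∀ j : ℝ, (∑' k, F k j) = Complex.exp (z * j) * ((1 - (j:ℂ)) ^ (β - 1)) := by
    intro j
    have h1 : ∀ k : ℕ, F k j = ((z * j) ^ k / k !) * ((1 - (j:ℂ)) ^ (β - 1)) := by
      intro k
      simp only [hF]
      rw [add_sub_cancel_right, Complex.cpow_natCast, mul_pow]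
      ring
    rw [tsum_congr h1, tsum_mul_right]
    congr 1
    rw [Complex.exp_eq_exp_ℂ, NormedSpace.exp_eq_tsum_div]
  -- each term
  have hterm : ∀ k : ℕ, z ^ k / Complex.Gamma (1 + β + k) =
      (1 / Complex.Gamma β) * ∫ j in Ioc (0:ℝ) 1, F k j := by
    intro k
    have hbe : ∫ j in Ioc (0:ℝ) 1, F k j =
        z ^ k / k ! * Complex.betaIntegral ((k:ℂ) + 1) β := by
      rw [← intervalIntegral.integral_of_le zero_le_one, Complex.betaIntegral,
        ← intervalIntegral.integral_const_mul]
    have hG := Complex.Gamma_mul_Gamma_eq_betaIntegral (huk k) hβ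
    rw [Complex.Gamma_nat_eq_factorial] at hG
    have hne : Complex.Gamma ((k:ℂ) + 1 + β) ≠ 0 := by
      apply Complex.Gamma_ne_zero
      intro m hm
      have : ((k:ℂ) + 1 + β).re = (-(m:ℂ)).re := by rw [hm]
      simp at this
      have : β.re = -(m:ℝ) - (k:ℝ) - 1 := by linarith
      rw [this] at hβ
      have : (0:ℝ) ≤ (m:ℝ) + (k:ℝ) := by positivity
      linarith
    have h1βk : (1 : ℂ) + β + k = (k:ℂ) + 1 + β := by ring
    have hk : ((k ! : ℕ) : ℂ) ≠ 0 := Nat.cast_ne_zero.mpr k.factorial_ne_zero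
    have hbeta : Complex.betaIntegral ((k:ℂ) + 1) β =
        ((k ! : ℕ) : ℂ) * Complex.Gamma β / Complex.Gamma ((k:ℂ) + 1 + β) := by
      rw [eq_div_iff hne]
      linear_combination -hG
    rw [h1βk, hbe, hbeta]
    field_simp
  calc (∑' k : ℕ, z ^ k / Complex.Gamma (1 + β + k))
      = ∑' k : ℕ, (1 / Complex.Gamma β) * ∫ j in Ioc (0:ℝ) 1, F k j := tsum_congr hterm
    _ = (1 / Complex.Gamma β) * ∑' k : ℕ, ∫ j in Ioc (0:ℝ) 1, F k j := tsum_mul_left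
    _ = (1 / Complex.Gamma β) * ∫ j in Ioc (0:ℝ) 1, ∑' k, F k j := by rw [hswap]
    _ = (1 / Complex.Gamma β) * ∫ j in (0:ℝ)..1, ((1 - j : ℝ) : ℂ) ^ (β - 1) * Complex.exp (z * j) := by
        rw [intervalIntegral.integral_of_le zero_le_one]
        congr 1
        refine integral_congr_ae (Filter.Eventually.of_forall fun j => ?_)
        show (∑' k, F k j) = _
        rw [hpt j]
        push_cast
        ring
end

section
/- Define H(z, β) := 2/Γ(1 + β) - φ(1 + β, iz) - φ(1 + β, -iz), where φ(B, z) := ∑_{k ≥ 0} z^k / Γ(B + k). If Re(β) > 0, then (1/2) H(z, β) = (1/Γ(β)) ∫₀¹ (1-j)^{β-1} (1 - cos(zj)) dj. -/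
open MeasureTheory Complex intervalIntegral

private lemma g_integrableOn (β : ℂ) (hβ : 0 < β.re) :
    IntegrableOn (fun j : ℝ => ((1 - j : ℝ) : ℂ) ^ (β - 1)) (Set.Ioc (0:ℝ) 1) := by
  have h := Complex.betaIntegral_convergent (u := 1) (v := β) (by norm_num) hβ
  rw [intervalIntegrable_iff_integrableOn_Ioc_of_le zero_le_one] at h
  have : (fun x : ℝ => (x : ℂ) ^ ((1:ℂ) - 1) * (1 - (x:ℂ)) ^ (β - 1))
      = fun j : ℝ => ((1 - j : ℝ) : ℂ) ^ (β - 1) := by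
    funext x
    push_cast
    rw [sub_self, Complex.cpow_zero, one_mul]
  rwa [this] at h

private lemma norm_wj_pow_le {w : ℂ} {j : ℝ} (hj : j ∈ Set.Ioc (0:ℝ) 1) (k : ℕ) :
    ‖(w * (j : ℂ)) ^ k / ((Nat.factorial k : ℕ) : ℂ)‖
      ≤ ‖w‖ ^ k / (Nat.factorial k : ℝ) := by
  rw [norm_div, norm_pow]
  have h1 : ‖((Nat.factorial k : ℕ) : ℂ)‖ = (Nat.factorial k : ℝ) := by
    simp
  rw [h1]
  gcongr
  rw [norm_mul, Complex.norm_real, Real.norm_eq_abs, abs_of_pos hj.1]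
  calc ‖w‖ * j ≤ ‖w‖ * 1 := by gcongr; exact hj.2
  _ = ‖w‖ := mul_one _

private lemma phi_hasSum (β : ℂ) (hβ : 0 < β.re) (w : ℂ) :
    HasSum (fun k : ℕ => w ^ k / Complex.Gamma (1 + β + k))
      ((Complex.Gamma β)⁻¹ *
        ∫ j in (0:ℝ)..1, ((1 - j : ℝ) : ℂ) ^ (β - 1) * Complex.exp (w * j)) := by
  have hΓβ : Complex.Gamma β ≠ 0 := Complex.Gamma_ne_zero_of_re_pos hβ
  set g : ℝ → ℂ := fun j => ((1 - j : ℝ) : ℂ) ^ (β - 1) with hg_def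
  have hg : IntegrableOn g (Set.Ioc (0:ℝ) 1) := g_integrableOn β hβ
  set F : ℕ → ℝ → ℂ :=
    fun k j => (w * j) ^ k / ((Nat.factorial k : ℕ) : ℂ) * g j with hF_def
  -- integrability of each term
  have hF_int : ∀ k : ℕ, Integrable (F k) (volume.restrict (Set.Ioc (0:ℝ) 1)) := by
    intro k
    refine hg.bdd_mul (c := ‖w‖ ^ k / (Nat.factorial k : ℝ))
      ((Continuous.div_const (by continuity) _).aestronglyMeasurable) ?_
    rw [ae_restrict_iff' measurableSet_Ioc]
    filter_upwards with j hj
    exact norm_wj_pow_le hj k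
  -- summability of integrals of norms
  have hF_sum : Summable fun k => ∫ j in Set.Ioc (0:ℝ) 1, ‖F k j‖ := by
    refine Summable.of_nonneg_of_le
      (fun k => integral_nonneg fun j => norm_nonneg _)
      (fun k => ?_)
      (((Real.summable_pow_div_factorial ‖w‖).mul_right
        (∫ j in Set.Ioc (0:ℝ) 1, ‖g j‖)))
    have hle : ∀ j ∈ Set.Ioc (0:ℝ) 1,
        ‖F k j‖ ≤ (‖w‖ ^ k / (Nat.factorial k : ℝ)) * ‖g j‖ := by
      intro j hj
      rw [hF_def]
      simp only [norm_mul]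
      gcongr
      exact norm_wj_pow_le hj k
    calc (∫ j in Set.Ioc (0:ℝ) 1, ‖F k j‖)
        ≤ ∫ j in Set.Ioc (0:ℝ) 1, (‖w‖ ^ k / (Nat.factorial k : ℝ)) * ‖g j‖ :=
          setIntegral_mono_on (hF_int k).norm (hg.norm.const_mul _)
            measurableSet_Ioc hle
      _ = ‖w‖ ^ k / (Nat.factorial k : ℝ) * ∫ j in Set.Ioc (0:ℝ) 1, ‖g j‖ :=
          integral_const_mul _ _
  have key := MeasureTheory.hasSum_integral_of_summable_integral_norm hF_int hF_sum
  -- identify the integral of the tsum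
  have htsum : ∀ j : ℝ, (∑' k : ℕ, F k j) = g j * Complex.exp (w * j) := by
    intro j
    rw [hF_def]
    simp only
    rw [tsum_mul_right, mul_comm]
    congr 1
    rw [Complex.exp_eq_exp_ℂ, NormedSpace.exp_eq_tsum_div]
  -- identify each integral
  have hint : ∀ k : ℕ, (∫ j in Set.Ioc (0:ℝ) 1, F k j)
      = Complex.Gamma β * (w ^ k / Complex.Gamma (1 + β + k)) := by
    intro k
    have h1 : (∫ j in Set.Ioc (0:ℝ) 1, F k j) = ∫ j in (0:ℝ)..1, F k j :=
      (intervalIntegral.integral_of_le zero_le_one).symm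
    have h2 : (∫ j in (0:ℝ)..1, F k j)
        = (w ^ k / ((Nat.factorial k : ℕ) : ℂ)) * Complex.betaIntegral ((k : ℂ) + 1) β := by
      rw [Complex.betaIntegral, ← intervalIntegral.integral_const_mul]
      refine intervalIntegral.integral_congr fun x hx => ?_
      rw [hF_def]
      simp only
      rw [add_sub_cancel_right, Complex.cpow_natCast, hg_def]
      push_cast
      ring
    have h3 : Complex.betaIntegral ((k : ℂ) + 1) β
        = ((Nat.factorial k : ℕ) : ℂ) * Complex.Gamma β / Complex.Gamma (1 + β + k) := by
      have hb := Complex.Gamma_mul_Gamma_eq_betaIntegral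
        (s := (k : ℂ) + 1) (t := β) (by simp; positivity) hβ
      rw [Complex.Gamma_nat_eq_factorial] at hb
      have hne : Complex.Gamma ((k : ℂ) + 1 + β) ≠ 0 := by
        apply Complex.Gamma_ne_zero_of_re_pos
        simp only [Complex.add_re, Complex.natCast_re, Complex.one_re]
        positivity
      have hcomm : (1 : ℂ) + β + k = (k : ℂ) + 1 + β := by ring
      rw [hcomm, eq_div_iff hne]
      linear_combination -hb
    have hkne : ((Nat.factorial k : ℕ) : ℂ) ≠ 0 :=
      Nat.cast_ne_zero.mpr (Nat.factorial_ne_zero k)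
    have hne2 : Complex.Gamma (1 + β + k) ≠ 0 := by
      apply Complex.Gamma_ne_zero_of_re_pos
      simp only [Complex.add_re, Complex.natCast_re, Complex.one_re]
      positivity
    rw [h1, h2, h3]
    field_simp
  -- assemble
  rw [funext hint] at key
  have key2 := key.mul_left (Complex.Gamma β)⁻¹
  have hfun : (fun k : ℕ => (Complex.Gamma β)⁻¹ *
      (Complex.Gamma β * (w ^ k / Complex.Gamma (1 + β + k))))
      = fun k : ℕ => w ^ k / Complex.Gamma (1 + β + k) := by
    funext k; rw [inv_mul_cancel_left₀ hΓβ]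
  rw [hfun] at key2
  convert key2 using 2
  · rfl
  rw [intervalIntegral.integral_of_le zero_le_one]
  exact setIntegral_congr_fun measurableSet_Ioc fun j _ => (htsum j).symm

private lemma exp_intervalIntegrable (β : ℂ) (hβ : 0 < β.re) (w : ℂ) :
    IntervalIntegrable (fun j : ℝ => ((1 - j : ℝ) : ℂ) ^ (β - 1) * Complex.exp (w * j))
      volume 0 1 := by
  rw [intervalIntegrable_iff_integrableOn_Ioc_of_le zero_le_one]
  have hg : IntegrableOn (fun j : ℝ => ((1 - j : ℝ) : ℂ) ^ (β - 1)) (Set.Ioc (0:ℝ) 1) :=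
    g_integrableOn β hβ
  refine Integrable.mono' (hg.norm.const_mul (Real.exp ‖w‖))
    (hg.aestronglyMeasurable.mul
      ((Complex.continuous_exp.comp (by continuity)).aestronglyMeasurable.mono_measure
        Measure.restrict_le_self)) ?_
  rw [ae_restrict_iff' measurableSet_Ioc]
  filter_upwards with j hj
  rw [norm_mul, mul_comm]
  gcongr
  have habs : ‖Complex.exp (w * (j:ℂ))‖ = Real.exp ((w * (j:ℂ)).re) := Complex.norm_exp _
  rw [habs]
  apply Real.exp_le_exp.mpr
  calc (w * (j:ℂ)).re ≤ ‖w * (j:ℂ)‖ := Complex.re_le_norm _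
    _ = ‖w‖ * |j| := by rw [norm_mul, Complex.norm_real, Real.norm_eq_abs]
    _ = ‖w‖ * j := by rw [abs_of_pos hj.1]
    _ ≤ ‖w‖ * 1 := by gcongr; exact hj.2
    _ = ‖w‖ := mul_one _

/-- Claim 5.1: for Re β > 0,
(1/2) H(z, β) = (1/Γ(β)) ∫₀¹ (1-j)^(β-1) (1 - cos(zj)) dj, where
H(z, β) = 2/Γ(1+β) - φ(1+β, iz) - φ(1+β, -iz) and φ(B, w) = ∑_{k≥0} w^k/Γ(B+k). -/
theorem H_integral_representation (β : ℂ) (hβ : 0 < β.re) (z : ℂ) :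
    (1 / 2 : ℂ) * (2 / Complex.Gamma (1 + β)
        - (∑' k : ℕ, (Complex.I * z) ^ k / Complex.Gamma (1 + β + k))
        - ∑' k : ℕ, (-(Complex.I * z)) ^ k / Complex.Gamma (1 + β + k)) =
      (1 / Complex.Gamma β) *
        ∫ j in (0:ℝ)..1, ((1 - j : ℝ) : ℂ) ^ (β - 1) * (1 - Complex.cos (z * j)) := by
  have h0 := phi_hasSum β hβ 0
  have h1 := (phi_hasSum β hβ (Complex.I * z)).tsum_eq
  have h2 := (phi_hasSum β hβ (-(Complex.I * z))).tsum_eq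
  -- the w = 0 case gives the Gamma term
  have h0' : 2 / Complex.Gamma (1 + β)
      = 2 * ((Complex.Gamma β)⁻¹ *
        ∫ j in (0:ℝ)..1, ((1 - j : ℝ) : ℂ) ^ (β - 1) * Complex.exp ((0:ℂ) * j)) := by
    rw [← h0.tsum_eq, tsum_eq_single 0 (fun k hk => by simp [zero_pow hk])]
    norm_num
    ring
  rw [h0', h1, h2]
  have i0 := exp_intervalIntegrable β hβ 0
  have i1 := exp_intervalIntegrable β hβ (Complex.I * z)
  have i2 := exp_intervalIntegrable β hβ (-(Complex.I * z))
  have hsplit : (∫ j in (0:ℝ)..1, ((1 - j : ℝ) : ℂ) ^ (β - 1) * (1 - Complex.cos (z * j)))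
      = (∫ j in (0:ℝ)..1, ((1 - j : ℝ) : ℂ) ^ (β - 1) * Complex.exp ((0:ℂ) * j))
        - (1/2 : ℂ) * (∫ j in (0:ℝ)..1,
            ((1 - j : ℝ) : ℂ) ^ (β - 1) * Complex.exp ((Complex.I * z) * j))
        - (1/2 : ℂ) * (∫ j in (0:ℝ)..1,
            ((1 - j : ℝ) : ℂ) ^ (β - 1) * Complex.exp ((-(Complex.I * z)) * j)) := by
    have e : (∫ j in (0:ℝ)..1, ((1 - j : ℝ) : ℂ) ^ (β - 1) * (1 - Complex.cos (z * j)))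
        = ∫ j in (0:ℝ)..1,
            (((1 - j : ℝ) : ℂ) ^ (β - 1) * Complex.exp ((0:ℂ) * j)
              - (1/2 : ℂ) * (((1 - j : ℝ) : ℂ) ^ (β - 1) * Complex.exp ((Complex.I * z) * j))
              - (1/2 : ℂ) * (((1 - j : ℝ) : ℂ) ^ (β - 1)
                  * Complex.exp ((-(Complex.I * z)) * j))) := by
      refine intervalIntegral.integral_congr fun j hj => ?_
      have e1 : Complex.I * z * j = z * j * Complex.I := by ring
      have e2 : -(Complex.I * z) * (j : ℂ) = -(z * (j:ℂ)) * Complex.I := by ring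
      rw [Complex.cos, e1, e2]
      simp only [zero_mul, Complex.exp_zero]
      ring
    rw [e, intervalIntegral.integral_sub (i0.sub (i1.const_mul _)) (i2.const_mul _),
      intervalIntegral.integral_sub i0 (i1.const_mul _),
      intervalIntegral.integral_const_mul, intervalIntegral.integral_const_mul]
  rw [hsplit]
  ring
end

section
/- Let β > -2 be real, w ≥ 0 an integer, and define (1/2) H(r, β, 2w) := (-1)^{w+1} ∑_{k ≥ w+1} (-1)^k r^{2k} / Γ(1 + β + 2k). Then r ↦ H(r, β, 2w) is strictly increasing on the interval [0, 1]. -/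
open Real Set Filter

private lemma pairF_strictMonoOn (β : ℝ) (hβ : -2 < β) (k : ℕ) (hk : 1 ≤ k) :
    StrictMonoOn (fun x : ℝ => x ^ (2 * k) / Real.Gamma (1 + β + 2 * (k : ℝ))
      - x ^ (2 * k + 2) / Real.Gamma (1 + β + 2 * (k : ℝ) + 2)) (Set.Icc 0 1) := by
  have hK : (1 : ℝ) ≤ (k : ℝ) := by exact_mod_cast hk
  set X : ℝ := 1 + β + 2 * (k : ℝ) with hX
  have hXgt : 2 * (k : ℝ) - 1 < X := by rw [hX]; linarith
  have hXpos : 0 < X := by linarith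
  have hG1 : 0 < Real.Gamma X := Real.Gamma_pos_of_pos hXpos
  have hrec : Real.Gamma (X + 2) = (X + 1) * X * Real.Gamma X := by
    have h2 : Real.Gamma (X + 1) = X * Real.Gamma X := Real.Gamma_add_one (by linarith)
    have h1 : Real.Gamma (X + 1 + 1) = (X + 1) * Real.Gamma (X + 1) :=
      Real.Gamma_add_one (by linarith)
    calc Real.Gamma (X + 2) = Real.Gamma (X + 1 + 1) := by ring_nf
    _ = (X + 1) * (X * Real.Gamma X) := by rw [h1, h2]
    _ = (X + 1) * X * Real.Gamma X := by ring
  have hG2 : 0 < Real.Gamma (X + 2) := Real.Gamma_pos_of_pos (by linarith)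
  apply strictMonoOn_of_deriv_pos (convex_Icc 0 1)
  · fun_prop
  · intro x hx
    rw [interior_Icc] at hx
    obtain ⟨hx0, hx1⟩ := hx
    have hd : HasDerivAt (fun x : ℝ => x ^ (2 * k) / Real.Gamma X
        - x ^ (2 * k + 2) / Real.Gamma (X + 2))
        ((2 * k : ℕ) * x ^ (2 * k - 1) / Real.Gamma X
          - (2 * k + 2 : ℕ) * x ^ (2 * k + 1) / Real.Gamma (X + 2)) x := by
      have h1 := (hasDerivAt_pow (2 * k) x).div_const (Real.Gamma X)
      have h2 := (hasDerivAt_pow (2 * k + 2) x).div_const (Real.Gamma (X + 2))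
      simpa [Pi.sub_def] using h1.sub h2
    rw [hd.deriv]
    push_cast
    have hpow : x ^ (2 * k + 1) = x ^ (2 * k - 1) * x ^ 2 := by
      rw [← pow_add]; congr 1; omega
    have key : (2 * (k : ℝ) + 2) * x ^ 2 / Real.Gamma (X + 2) < 2 * k / Real.Gamma X := by
      rw [hrec, div_lt_div_iff₀ (by positivity) hG1]
      have hX1' : 1 < X := by linarith
      have hx2 : x ^ 2 < 1 := by nlinarith
      have hXX : 2 * (k:ℝ) + 2 < 2 * k * ((X + 1) * X) := by
        nlinarith [mul_nonneg (mul_nonneg (by linarith : (0:ℝ) ≤ 2 * (k:ℝ)) hXpos.le)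
          (by linarith : (0:ℝ) ≤ X - 1),
          mul_pos (by linarith : (0:ℝ) < 4 * (k:ℝ)) (by linarith : (0:ℝ) < X - 1)]
      have hmain : (2 * (k : ℝ) + 2) * x ^ 2 < 2 * k * ((X + 1) * X) := by
        nlinarith [hx2, hXX]
      nlinarith [hG1, hmain, mul_pos hXpos hG1]
    have hxp : 0 < x ^ (2 * k - 1) := pow_pos hx0 _
    calc (0:ℝ) < x ^ (2 * k - 1) * (2 * k / Real.Gamma X
          - (2 * (k:ℝ) + 2) * x ^ 2 / Real.Gamma (X + 2)) :=
        mul_pos hxp (by linarith)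
    _ = 2 * (k:ℝ) * x ^ (2 * k - 1) / Real.Gamma X
          - (2 * (k:ℝ) + 2) * x ^ (2 * k + 1) / Real.Gamma (X + 2) := by
        rw [hpow]; ring

private lemma summable_inv_gamma (β : ℝ) (hβ : -2 < β) (w : ℕ) :
    Summable (fun j : ℕ => (Real.Gamma (1 + β + 2 * ((j : ℝ) + w + 1)))⁻¹) := by
  apply summable_of_ratio_norm_eventually_le (r := 1 / 2) (by norm_num)
  filter_upwards with j
  set X : ℝ := 1 + β + 2 * ((j : ℝ) + w + 1) with hX
  have hX1 : 1 < X := by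
    have : (0:ℝ) ≤ (j:ℝ) := Nat.cast_nonneg j
    have : (0:ℝ) ≤ (w:ℝ) := Nat.cast_nonneg w
    rw [hX]; linarith
  have hG1 : 0 < Real.Gamma X := Real.Gamma_pos_of_pos (by linarith)
  have hrec : Real.Gamma (X + 2) = (X + 1) * X * Real.Gamma X := by
    have h2 : Real.Gamma (X + 1) = X * Real.Gamma X := Real.Gamma_add_one (by linarith)
    have h1 : Real.Gamma (X + 1 + 1) = (X + 1) * Real.Gamma (X + 1) :=
      Real.Gamma_add_one (by linarith)
    calc Real.Gamma (X + 2) = Real.Gamma (X + 1 + 1) := by ring_nf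
    _ = (X + 1) * (X * Real.Gamma X) := by rw [h1, h2]
    _ = (X + 1) * X * Real.Gamma X := by ring
  have harg : 1 + β + 2 * (((j+1 : ℕ) : ℝ) + w + 1) = X + 2 := by push_cast [hX]; ring
  rw [harg, hrec]
  have hG2 : 0 < (X + 1) * X * Real.Gamma X := by positivity
  rw [Real.norm_eq_abs, Real.norm_eq_abs, abs_of_pos (inv_pos.2 hG2),
    abs_of_pos (inv_pos.2 hG1)]
  rw [mul_inv, mul_inv]
  have h2le : (2:ℝ) ≤ (X + 1) * X := by nlinarith
  have : ((X + 1) * X)⁻¹ ≤ (2:ℝ)⁻¹ := by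
    apply inv_anti₀ (by norm_num) h2le
  calc ((X+1))⁻¹ * X⁻¹ * (Real.Gamma X)⁻¹ = ((X+1) * X)⁻¹ * (Real.Gamma X)⁻¹ := by
        rw [mul_inv]
  _ ≤ (2:ℝ)⁻¹ * (Real.Gamma X)⁻¹ := by
        apply mul_le_mul_of_nonneg_right this (by positivity)
  _ = 1 / 2 * (Real.Gamma X)⁻¹ := by norm_num

/-- Lemma 5.4 (1): for real β > -2 and integer w ≥ 0, the function
r ↦ H(r, β, 2w) = 2 (-1)^(w+1) ∑_{k ≥ w+1} (-1)^k r^(2k)/Γ(1+β+2k)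
is strictly increasing on [0, 1]. -/
theorem H_strictMonoOn (β : ℝ) (hβ : -2 < β) (w : ℕ) :
    StrictMonoOn (fun r : ℝ =>
        2 * (-1 : ℝ) ^ (w + 1) *
          ∑' j : ℕ, (-1 : ℝ) ^ (j + w + 1) * r ^ (2 * (j + w + 1)) /
            Real.Gamma (1 + β + 2 * ((j : ℝ) + w + 1)))
      (Set.Icc 0 1) := by
  -- the summand after absorbing the sign factor
  set f : ℝ → ℕ → ℝ := fun r j =>
    2 * (-1 : ℝ) ^ j * (r ^ (2 * (j + w + 1)) / Real.Gamma (1 + β + 2 * ((j : ℝ) + w + 1)))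
    with hf
  have hGpos : ∀ j : ℕ, 0 < Real.Gamma (1 + β + 2 * ((j : ℝ) + w + 1)) := by
    intro j
    apply Real.Gamma_pos_of_pos
    have h1 : (0:ℝ) ≤ (j:ℝ) := Nat.cast_nonneg j
    have h2 : (0:ℝ) ≤ (w:ℝ) := Nat.cast_nonneg w
    linarith
  -- the original function equals r ↦ ∑' j, f r j
  have hFeq : ∀ r : ℝ,
      2 * (-1 : ℝ) ^ (w + 1) *
        ∑' j : ℕ, (-1 : ℝ) ^ (j + w + 1) * r ^ (2 * (j + w + 1)) /
          Real.Gamma (1 + β + 2 * ((j : ℝ) + w + 1)) = ∑' j : ℕ, f r j := by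
    intro r
    rw [← tsum_mul_left]
    congr 1; funext j
    have hsgn : (-1 : ℝ) ^ (w + 1) * (-1 : ℝ) ^ (j + w + 1) = (-1 : ℝ) ^ j := by
      rw [← pow_add]
      have : (w + 1) + (j + w + 1) = j + 2 * (w + 1) := by ring
      rw [this, pow_add, pow_mul]
      norm_num
    show 2 * (-1:ℝ)^(w+1) * ((-1:ℝ)^(j+w+1) * r ^ (2*(j+w+1)) /
        Real.Gamma (1+β+2*((j:ℝ)+w+1))) = _
    calc 2 * (-1:ℝ)^(w+1) * ((-1:ℝ)^(j+w+1) * r ^ (2*(j+w+1)) /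
          Real.Gamma (1+β+2*((j:ℝ)+w+1)))
        = ((-1:ℝ)^(w+1) * (-1:ℝ)^(j+w+1)) *
          (2 * (r ^ (2*(j+w+1)) / Real.Gamma (1+β+2*((j:ℝ)+w+1)))) := by ring
      _ = f r j := by rw [hsgn, hf]; ring
  -- summability
  have hsum : ∀ r ∈ Set.Icc (0:ℝ) 1, Summable (f r) := by
    intro r hr
    apply Summable.of_norm_bounded
      (g := fun j : ℕ => 2 * (Real.Gamma (1 + β + 2 * ((j:ℝ) + w + 1)))⁻¹)
      ((summable_inv_gamma β hβ w).mul_left 2)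
    intro j
    have h1 : 0 ≤ r := hr.1
    have h2 : r ≤ 1 := hr.2
    have hy : 0 ≤ r ^ (2*(j+w+1)) / Real.Gamma (1 + β + 2*((j:ℝ)+w+1)) :=
      div_nonneg (pow_nonneg h1 _) (hGpos j).le
    have hfj : f r j = 2 * (-1:ℝ)^j *
        (r ^ (2*(j+w+1)) / Real.Gamma (1 + β + 2*((j:ℝ)+w+1))) := rfl
    rw [hfj, norm_mul, norm_mul]
    simp only [Real.norm_eq_abs, abs_pow, abs_neg, abs_one, one_pow, mul_one]
    rw [abs_of_nonneg hy, abs_of_nonneg (by norm_num : (0:ℝ) ≤ 2)]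
    have hrn : r ^ (2*(j+w+1)) ≤ 1 := pow_le_one₀ h1 h2
    calc 2 * (r ^ (2*(j+w+1)) / Real.Gamma (1 + β + 2*((j:ℝ)+w+1)))
        ≤ 2 * (1 / Real.Gamma (1 + β + 2*((j:ℝ)+w+1))) := by
          gcongr
          exact (hGpos j).le
      _ = 2 * (Real.Gamma (1 + β + 2*((j:ℝ)+w+1)))⁻¹ := by rw [one_div]
  have he : ∀ r ∈ Set.Icc (0:ℝ) 1, Summable (fun m => f r (2*m)) := fun r hr =>
    (hsum r hr).comp_injective (fun a b h => by omega)
  have ho : ∀ r ∈ Set.Icc (0:ℝ) 1, Summable (fun m => f r (2*m+1)) := fun r hr =>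
    (hsum r hr).comp_injective (fun a b h => by omega)
  have hpair : ∀ r ∈ Set.Icc (0:ℝ) 1,
      (∑' j, f r j) = ∑' m, (f r (2*m) + f r (2*m+1)) := by
    intro r hr
    rw [← tsum_even_add_odd (he r hr) (ho r hr), Summable.tsum_add (he r hr) (ho r hr)]
  -- value of each pair
  have hpairval : ∀ r : ℝ, ∀ m : ℕ, f r (2*m) + f r (2*m+1) =
      2 * ((fun x : ℝ => x ^ (2*(2*m+w+1)) / Real.Gamma (1 + β + 2*((2*m+w+1 : ℕ):ℝ))
        - x ^ (2*(2*m+w+1)+2) / Real.Gamma (1 + β + 2*((2*m+w+1 : ℕ):ℝ) + 2)) r) := by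
    intro r m
    have s1 : (-1:ℝ)^(2*m) = 1 := by simp [pow_mul]
    have s2 : (-1:ℝ)^(2*m+1) = -1 := by simp [pow_add, pow_mul]
    have hfe : f r (2*m) = 2 * (-1:ℝ)^(2*m) *
        (r ^ (2*(2*m+w+1)) / Real.Gamma (1 + β + 2*(((2*m:ℕ):ℝ)+w+1))) := rfl
    have hfo : f r (2*m+1) = 2 * (-1:ℝ)^(2*m+1) *
        (r ^ (2*(2*m+1+w+1)) / Real.Gamma (1 + β + 2*(((2*m+1:ℕ):ℝ)+w+1))) := rfl
    have e1 : 1 + β + 2*(((2*m:ℕ):ℝ)+w+1) = 1 + β + 2*((2*m+w+1 : ℕ):ℝ) := by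
      push_cast; ring
    have e2 : 1 + β + 2*(((2*m+1:ℕ):ℝ)+w+1) = 1 + β + 2*((2*m+w+1 : ℕ):ℝ) + 2 := by
      push_cast; ring
    have e3 : 2*(2*m+1+w+1) = 2*(2*m+w+1)+2 := by ring
    rw [hfe, hfo, s1, s2, e1, e2, e3]
    ring
  intro t ht s hs hts
  simp only
  rw [hFeq t, hFeq s, hpair t ht, hpair s hs]
  refine Summable.tsum_lt_tsum (f := fun m => f t (2*m) + f t (2*m+1)) (i := 0)
    (fun m => ?_) ?_ ((he t ht).add (ho t ht)) ((he s hs).add (ho s hs))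
  · dsimp only
    rw [hpairval t m, hpairval s m]
    have hmono := (pairF_strictMonoOn β hβ (2*m+w+1) (by omega)).monotoneOn ht hs hts.le
    linarith
  · rw [hpairval t 0, hpairval s 0]
    have hmono := pairF_strictMonoOn β hβ (2*0+w+1) (by omega) ht hs hts
    linarith
end
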